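/- Let G be a locally compact group with left Haar measure μ and modular function ∇. Let X ⊆ G be compact, let g₁ ∈ C_c(G) with ∫_G g₁ dμ = 1, and let Y ⊆ G be a compact set containing the support of g₁ with 0 < μ(Y). Define g₀(u) = μ(uY ∩ (XY)⁻¹Y)/μ(Y), and set g = (∇^{−1/2} g₁) ∗ (∇^{−1/2} g₀) (convolution, where ∇^{−1/2}h denotes the pointwise product s ↦ ∇(s)^{−1/2} h(s)). Then for every s ∈ X, g(s⁻¹) = ∇(s)^{1/2}; equivalently (Kg)(s) := g(s⁻¹)∇(s)^{−1/2} = 1 for all s ∈ X. (This is the key computation in the proof of Proposition 6.2, producing g ∈ C_c(G)² with Kg ≡ 1 on X, which shows that A_p(Ĝ) contains a dense subalgebra of C*_λ(G).) -/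

import Mathlib

open MeasureTheory Filter
open scoped ENNReal Pointwise

/-- The function `g₀(u) = μ(uY ∩ (XY)⁻¹Y)/μ(Y)` from the construction in Proposition 6.2. -/
noncomputable def gZero {G : Type*} [Group G] [MeasurableSpace G]
    (μ : Measure G) (X Y : Set G) (u : G) : ℝ :=
  (μ ((u • Y) ∩ ((X * Y)⁻¹ * Y))).toReal / (μ Y).toReal

/-- Let `G` be a locally compact group with left Haar measure `μ` and modular
function `del`.  Let `X ⊆ G` be compact, `g₁ ∈ C_c(G)` with `∫_G g₁ dμ = 1`, and `Y` a
compact set containing the support of `g₁` with `0 < μ(Y)`.  With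
`g₀(u) = μ(uY ∩ (XY)⁻¹Y)/μ(Y)` and `g = (del^{-1/2} g₁) ∗ (del^{-1/2} g₀)` (so that
`g(s⁻¹) = ∫_G (del t)^{-1/2} g₁(t) · (del (t⁻¹s⁻¹))^{-1/2} g₀(t⁻¹s⁻¹) dμ(t)`), we have for
every `s ∈ X` that `g(s⁻¹) = (del s)^{1/2}`; equivalently `(Kg)(s) = g(s⁻¹)(del s)^{-1/2} = 1`
for all `s ∈ X`. -/
theorem stmt_9 {G : Type*} [Group G] [TopologicalSpace G] [IsTopologicalGroup G]
    [LocallyCompactSpace G] [T2Space G] [MeasurableSpace G] [BorelSpace G]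
    (μ : Measure G) [Measure.IsHaarMeasure μ]
    (del : G → ℝ) (hdel_pos : ∀ s, 0 < del s) (hdel_cont : Continuous del)
    (hdel : ∀ s : G, Measure.map (fun t => t * s) μ = ENNReal.ofReal (del s)⁻¹ • μ)
    (X : Set G) (hX : IsCompact X)
    (g₁ : G → ℂ) (hg₁ : Continuous g₁) (hg₁c : HasCompactSupport g₁)
    (hg₁int : ∫ t, g₁ t ∂μ = 1)
    (Y : Set G) (hY : IsCompact Y) (hYsupp : tsupport g₁ ⊆ Y) (hY0 : 0 < μ Y) :
    ∀ s ∈ X,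
      (∫ t, (((del t ^ (-(1/2) : ℝ) : ℝ) : ℂ) * g₁ t) *
          (((del (t⁻¹ * s⁻¹) ^ (-(1/2) : ℝ) : ℝ) : ℂ) *
            ((gZero μ X Y (t⁻¹ * s⁻¹) : ℝ) : ℂ)) ∂μ)
        = ((del s ^ ((1:ℝ)/2) : ℝ) : ℂ) ∧
      (∫ t, (((del t ^ (-(1/2) : ℝ) : ℝ) : ℂ) * g₁ t) *
          (((del (t⁻¹ * s⁻¹) ^ (-(1/2) : ℝ) : ℝ) : ℂ) *
            ((gZero μ X Y (t⁻¹ * s⁻¹) : ℝ) : ℂ)) ∂μ) *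
          ((del s ^ (-(1/2) : ℝ) : ℝ) : ℂ) = 1 := by
  intro s hs
  have hYfin : μ Y ≠ ∞ := hY.measure_lt_top.ne
  -- multiplicativity of del
  have hmul : ∀ a b : G, del (a * b) = del a * del b := by
    intro a b
    have h2 : Measure.map (fun t : G => t * (a * b)) μ
        = ENNReal.ofReal (del a)⁻¹ • (ENNReal.ofReal (del b)⁻¹ • μ) := by
      have hcomp : (fun t : G => t * (a * b)) = (fun t => t * b) ∘ (fun t => t * a) := by
        ext t; simp [mul_assoc]
      rw [hcomp, ← Measure.map_map (measurable_mul_const b) (measurable_mul_const a),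
        hdel a, Measure.map_smul, hdel b]
    rw [hdel (a * b)] at h2
    have h3 := congrArg (fun ν : Measure G => ν Y) h2
    simp only [Measure.smul_apply, smul_eq_mul, ← mul_assoc] at h3
    have h4 : ENNReal.ofReal (del (a*b))⁻¹ = ENNReal.ofReal (del a)⁻¹ * ENNReal.ofReal (del b)⁻¹ :=
      (ENNReal.mul_left_inj hY0.ne' hYfin).mp (by simpa using h3)
    rw [← ENNReal.ofReal_mul (inv_nonneg.2 (hdel_pos a).le)] at h4
    have h5 : (del (a*b))⁻¹ = (del a)⁻¹ * (del b)⁻¹ :=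
      (ENNReal.ofReal_eq_ofReal_iff (inv_nonneg.2 (hdel_pos (a*b)).le)
        (mul_nonneg (inv_nonneg.2 (hdel_pos a).le) (inv_nonneg.2 (hdel_pos b).le))).mp h4
    rw [← mul_inv] at h5
    exact inv_injective h5
  have hone : del 1 = 1 := by
    have h := hmul 1 1
    rw [mul_one] at h
    nlinarith [hdel_pos 1]
  have hinv : ∀ a : G, del a⁻¹ = (del a)⁻¹ := by
    intro a
    have h := hmul a⁻¹ a
    rw [inv_mul_cancel, hone] at h
    exact eq_inv_of_mul_eq_one_left h.symm
  have key : ∀ t : G,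
      (((del t ^ (-(1/2) : ℝ) : ℝ) : ℂ) * g₁ t) *
          (((del (t⁻¹ * s⁻¹) ^ (-(1/2) : ℝ) : ℝ) : ℂ) *
            ((gZero μ X Y (t⁻¹ * s⁻¹) : ℝ) : ℂ))
        = ((del s ^ ((1:ℝ)/2) : ℝ) : ℂ) * g₁ t := by
    intro t
    by_cases ht : t ∈ tsupport g₁
    · have htY : t ∈ Y := hYsupp ht
      have hsub : (t⁻¹ * s⁻¹) • Y ⊆ (X * Y)⁻¹ * Y := by
        rintro y ⟨z, hz, rfl⟩
        have : (s * t)⁻¹ ∈ (X * Y)⁻¹ := Set.inv_mem_inv.mpr (Set.mul_mem_mul hs htY)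
        have h := Set.mul_mem_mul this hz
        simpa [mul_inv_rev, smul_eq_mul] using h
      have hg0 : gZero μ X Y (t⁻¹ * s⁻¹) = 1 := by
        unfold gZero
        rw [Set.inter_eq_self_of_subset_left hsub, MeasureTheory.measure_smul]
        exact div_self (ENNReal.toReal_ne_zero.mpr ⟨hY0.ne', hYfin⟩)
      have hd : del (t⁻¹ * s⁻¹) = (del t)⁻¹ * (del s)⁻¹ := by
        rw [hmul, hinv, hinv]
      have hreal : del t ^ (-(1/2) : ℝ) * del (t⁻¹ * s⁻¹) ^ (-(1/2) : ℝ)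
          = del s ^ ((1:ℝ)/2) := by
        rw [hd, Real.mul_rpow (inv_nonneg.2 (hdel_pos t).le) (inv_nonneg.2 (hdel_pos s).le),
          Real.inv_rpow (hdel_pos t).le, Real.inv_rpow (hdel_pos s).le,
          Real.rpow_neg (hdel_pos t).le, Real.rpow_neg (hdel_pos s).le, inv_inv, inv_inv]
        have h1 : del t ^ ((1:ℝ)/2) ≠ 0 := (Real.rpow_pos_of_pos (hdel_pos t) _).ne'
        have h2 : (del t ^ ((1:ℝ)/2))⁻¹ * (del t ^ ((1:ℝ)/2) * del s ^ ((1:ℝ)/2))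
            = del s ^ ((1:ℝ)/2) := by field_simp
        simpa [neg_div] using h2
      rw [hg0]
      push_cast
      rw [mul_comm (((del t ^ (-(1/2) : ℝ) : ℝ) : ℂ)) (g₁ t), mul_one, mul_assoc,
        ← Complex.ofReal_mul, hreal]
      ring
    · have h0 : g₁ t = 0 := image_eq_zero_of_notMem_tsupport ht
      simp [h0]
  have hint : (∫ t, (((del t ^ (-(1/2) : ℝ) : ℝ) : ℂ) * g₁ t) *
          (((del (t⁻¹ * s⁻¹) ^ (-(1/2) : ℝ) : ℝ) : ℂ) *
            ((gZero μ X Y (t⁻¹ * s⁻¹) : ℝ) : ℂ)) ∂μ)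
      = ((del s ^ ((1:ℝ)/2) : ℝ) : ℂ) := by
    calc _ = ∫ t, ((del s ^ ((1:ℝ)/2) : ℝ) : ℂ) * g₁ t ∂μ := by
              exact integral_congr_ae (Filter.Eventually.of_forall key)
      _ = ((del s ^ ((1:ℝ)/2) : ℝ) : ℂ) * ∫ t, g₁ t ∂μ := integral_const_mul _ _
      _ = _ := by rw [hg₁int, mul_one]
  refine ⟨hint, ?_⟩
  rw [hint, ← Complex.ofReal_mul, ← Real.rpow_add (hdel_pos s)]
  norm_num
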